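/- (Lemma 4) Assume tr(R) = N_t and fix η ∈ [0, 1]. Define matrices recursively: M_0 = R; for each k ≥ 0, U^H M_k U is diagonal with nonnegative real entries, and letting μ_{k,1} ≥ ⋯ ≥ μ_{k,N_t} be these diagonal entries sorted in decreasing order with σ_k a permutation of {1, …, N_t} such that (U^H M_k U)_{σ_k(t), σ_k(t)} = μ_{k,t}, set X_k = √ρ · [u_{σ_k(1)}, …, u_{σ_k(T)}] (where u_j is the j-th column of U), E_k = M_k − M_k X_k (I_T + X_k^H M_k X_k)^{-1} X_k^H M_k, and M_{k+1} = η² E_k + (1 − η²) R. Then for every i ≥ 0, (1/N_t) tr(E_i) = 1 − (1/N_t) Σ_{k=0}^{i} Σ_{t=1}^{T} η^{2(i−k)} ρ μ_{k,t}² / (ρ μ_{k,t} + 1). -/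

import Mathlib

open Matrix BigOperators Finset

lemma aux_sandwich {Nt T : ℕ} {ρ : ℝ} (hρ : 0 ≤ ρ)
    (U N : Matrix (Fin Nt) (Fin Nt) ℂ) (g : Fin T → Fin Nt) (hg : Function.Injective g)
    (d : Fin Nt → ℂ) (hd : Uᴴ * N * U = Matrix.diagonal d)
    (X : Matrix (Fin Nt) (Fin T) ℂ) (hXg : X = (Real.sqrt ρ : ℂ) • U.submatrix id g) :
    Xᴴ * N * X = Matrix.diagonal (fun t => (ρ : ℂ) * d (g t)) := by
  have hXH : Xᴴ = (Real.sqrt ρ : ℂ) • (Uᴴ).submatrix g id := by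
    rw [hXg, Matrix.conjTranspose_smul, Matrix.conjTranspose_submatrix]
    congr 1
    simp [Complex.star_def, Complex.conj_ofReal]
  rw [hXH, hXg, Matrix.smul_mul, Matrix.smul_mul, Matrix.mul_smul, smul_smul]
  have hsub : Uᴴ.submatrix g id * N * U.submatrix id g = (Uᴴ * N * U).submatrix g g := by
    rw [Matrix.submatrix_mul (Uᴴ * N) U g id g Function.bijective_id,
        Matrix.submatrix_mul Uᴴ N g id id Function.bijective_id, Matrix.submatrix_id_id]
  rw [hsub, hd, Matrix.submatrix_diagonal d g hg]
  have hss : ((Real.sqrt ρ : ℂ)) * (Real.sqrt ρ : ℂ) = (ρ : ℂ) := by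
    rw [← Complex.ofReal_mul, Real.mul_self_sqrt hρ]
  rw [hss]
  ext i j
  by_cases h : i = j <;> simp [Matrix.diagonal_apply, h]

/-- Lemma 4: under the closed-loop Kalman recursion with optimal
eigen-direction training at each block, the MSE at block `i` is
`(1/N_t) tr(E_i) = 1 − (1/N_t) Σ_{k=0}^{i} Σ_{t=1}^{T} η^{2(i−k)} ρ μ_{k,t}²/(ρ μ_{k,t}+1)`. -/
theorem stmt_8 (Nt T : ℕ) (hNt : 0 < Nt) (hT : 0 < T) (hTN : T ≤ Nt)
    (ρ : ℝ) (hρ : 0 < ρ) (η : ℝ) (hη0 : 0 ≤ η) (hη1 : η ≤ 1)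
    (U : Matrix (Fin Nt) (Fin Nt) ℂ) (hU1 : Uᴴ * U = 1) (hU2 : U * Uᴴ = 1)
    (lam : Fin Nt → ℝ) (hnn : ∀ t, 0 ≤ lam t) (hmono : Antitone lam)
    (R : Matrix (Fin Nt) (Fin Nt) ℂ)
    (hR : R = U * Matrix.diagonal (fun t => (lam t : ℂ)) * Uᴴ)
    (htr : R.trace = (Nt : ℂ))
    (M E : ℕ → Matrix (Fin Nt) (Fin Nt) ℂ)
    (X : ℕ → Matrix (Fin Nt) (Fin T) ℂ)
    (mu : ℕ → Fin Nt → ℝ) (σ : ℕ → Equiv.Perm (Fin Nt))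
    (hM0 : M 0 = R)
    (hdiag : ∀ k, Uᴴ * M k * U
      = Matrix.diagonal (fun j => (mu k ((σ k).symm j) : ℂ)))
    (hmu_nn : ∀ k t, 0 ≤ mu k t)
    (hmu_mono : ∀ k, Antitone (mu k))
    (hX : ∀ k, X k = fun i t => (Real.sqrt ρ : ℂ) * U i (σ k (Fin.castLE hTN t)))
    (hE : ∀ k, E k = M k - M k * X k * (1 + (X k)ᴴ * M k * X k)⁻¹ * (X k)ᴴ * M k)
    (hMrec : ∀ k, M (k + 1) = ((η : ℂ) ^ 2) • E k + (1 - (η : ℂ) ^ 2) • R) :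
    ∀ i : ℕ, (1 / (Nt : ℝ)) * (E i).trace.re
      = 1 - (1 / (Nt : ℝ)) * ∑ k ∈ Finset.range (i + 1), ∑ t : Fin T,
          η ^ (2 * (i - k)) * ρ * mu k (Fin.castLE hTN t) ^ 2
            / (ρ * mu k (Fin.castLE hTN t) + 1) := by
  have hNt0 : (Nt : ℝ) ≠ 0 := Nat.cast_ne_zero.mpr hNt.ne'
  have hU2' : ∀ A : Matrix (Fin Nt) (Fin Nt) ℂ, U * (Uᴴ * A) = A := by
    intro A; rw [← Matrix.mul_assoc, hU2, Matrix.one_mul]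
  set s : ℕ → ℝ := fun k => ∑ t : Fin T,
      ρ * mu k (Fin.castLE hTN t) ^ 2 / (ρ * mu k (Fin.castLE hTN t) + 1) with hs
  -- key trace identity per block
  have key : ∀ k, (E k).trace = (M k).trace - ((s k : ℝ) : ℂ) := by
    intro k
    set gk : Fin T → Fin Nt := fun t => σ k (Fin.castLE hTN t) with hgk
    have hginj : Function.Injective gk := fun a b h =>
      Fin.castLE_injective hTN ((σ k).injective h)
    have hXk : X k = (Real.sqrt ρ : ℂ) • U.submatrix id gk := by
      rw [hX k]; ext i t
      simp [gk, Matrix.smul_apply, Matrix.submatrix_apply]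
    have hA := aux_sandwich hρ.le U (M k) gk hginj _ (hdiag k) (X k) hXk
    have hA' : (X k)ᴴ * M k * X k
        = Matrix.diagonal (fun t => (ρ : ℂ) * (mu k (Fin.castLE hTN t) : ℂ)) := by
      rw [hA]; congr 1; funext t; simp [gk]
    have hsq : Uᴴ * (M k * M k) * U = Matrix.diagonal
        (fun j => (mu k ((σ k).symm j) : ℂ) * (mu k ((σ k).symm j) : ℂ)) := by
      have h2 : Uᴴ * (M k * M k) * U = (Uᴴ * M k * U) * (Uᴴ * M k * U) := by
        simp only [Matrix.mul_assoc, hU2']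
      rw [h2, hdiag k, Matrix.diagonal_mul_diagonal]
    have hC := aux_sandwich hρ.le U (M k * M k) gk hginj _ hsq (X k) hXk
    have hC' : (X k)ᴴ * (M k * M k) * X k = Matrix.diagonal
        (fun t => (ρ : ℂ) * ((mu k (Fin.castLE hTN t) : ℂ) * (mu k (Fin.castLE hTN t) : ℂ))) := by
      rw [hC]; congr 1; funext t; simp [gk]
    have hvne : ∀ t : Fin T, (ρ * mu k (Fin.castLE hTN t) + 1 : ℝ) ≠ 0 := by
      intro t
      have h1 : 0 ≤ ρ * mu k (Fin.castLE hTN t) := mul_nonneg hρ.le (hmu_nn _ _)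
      linarith
    have hB : (1 + (X k)ᴴ * M k * X k)⁻¹ = Matrix.diagonal
        (fun t => (((ρ * mu k (Fin.castLE hTN t) + 1 : ℝ) : ℂ))⁻¹) := by
      rw [hA']
      have h1 : (1 : Matrix (Fin T) (Fin T) ℂ)
          + Matrix.diagonal (fun t => (ρ : ℂ) * (mu k (Fin.castLE hTN t) : ℂ))
          = Matrix.diagonal (fun t => ((ρ * mu k (Fin.castLE hTN t) + 1 : ℝ) : ℂ)) := by
        rw [← Matrix.diagonal_one, Matrix.diagonal_add]
        exact congrArg Matrix.diagonal (funext fun t => by push_cast; ring)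
      rw [h1]
      apply Matrix.inv_eq_right_inv
      rw [Matrix.diagonal_mul_diagonal]
      have h2 : (fun t : Fin T => ((ρ * mu k (Fin.castLE hTN t) + 1 : ℝ) : ℂ)
          * (((ρ * mu k (Fin.castLE hTN t) + 1 : ℝ) : ℂ))⁻¹) = fun _ => (1 : ℂ) := by
        funext t
        rw [mul_inv_cancel₀]
        exact_mod_cast Complex.ofReal_ne_zero.mpr (hvne t)
      rw [h2, Matrix.diagonal_one]
    rw [hE k, Matrix.trace_sub]
    congr 1
    have e2 : M k * X k * (1 + (X k)ᴴ * M k * X k)⁻¹ * (X k)ᴴ * M k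
        = (M k * X k * (1 + (X k)ᴴ * M k * X k)⁻¹) * ((X k)ᴴ * M k) := by
      simp only [Matrix.mul_assoc]
    rw [e2, Matrix.trace_mul_comm]
    have e3 : ((X k)ᴴ * M k) * (M k * X k * (1 + (X k)ᴴ * M k * X k)⁻¹)
        = ((X k)ᴴ * (M k * M k) * X k) * (1 + (X k)ᴴ * M k * X k)⁻¹ := by
      simp only [Matrix.mul_assoc]
    rw [e3, hC', hB, Matrix.diagonal_mul_diagonal, Matrix.trace_diagonal, hs]
    push_cast
    refine Finset.sum_congr rfl fun t _ => ?_
    rw [div_eq_mul_inv]; ring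
  have htrM : ∀ k, (M k).trace = ((∑ j, mu k j : ℝ) : ℂ) := by
    intro k
    have h1 : (Uᴴ * M k * U).trace = (M k).trace := by
      rw [Matrix.trace_mul_comm (Uᴴ * M k) U, ← Matrix.mul_assoc, hU2, Matrix.one_mul]
    rw [← h1, hdiag k, Matrix.trace_diagonal]
    push_cast
    exact Equiv.sum_comp (σ k).symm fun j => ((mu k j : ℝ) : ℂ)
  have hrec : ∀ k, (M (k + 1)).trace
      = (η : ℂ) ^ 2 * (E k).trace + (1 - (η : ℂ) ^ 2) * (Nt : ℂ) := by
    intro k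
    rw [hMrec k, Matrix.trace_add, Matrix.trace_smul, Matrix.trace_smul, htr]
    simp [smul_eq_mul]
  have main : ∀ i, (E i).trace
      = (((Nt : ℝ) - ∑ k ∈ Finset.range (i + 1), η ^ (2 * (i - k)) * s k : ℝ) : ℂ) := by
    intro i
    induction i with
    | zero =>
      rw [key 0, hM0, htr]
      rw [Finset.sum_range_one]
      norm_num
    | succ i ih =>
      rw [key (i + 1), hrec i, ih]
      have hsum : ∑ k ∈ Finset.range (i + 1 + 1), η ^ (2 * (i + 1 - k)) * s k
          = η ^ 2 * (∑ k ∈ Finset.range (i + 1), η ^ (2 * (i - k)) * s k) + s (i + 1) := by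
        rw [Finset.sum_range_succ]
        have h2 : ∀ k ∈ Finset.range (i + 1),
            η ^ (2 * (i + 1 - k)) * s k = η ^ 2 * (η ^ (2 * (i - k)) * s k) := by
          intro k hk
          have hk' : k ≤ i := Nat.lt_succ_iff.mp (Finset.mem_range.mp hk)
          have h3 : 2 * (i + 1 - k) = 2 * (i - k) + 2 := by omega
          rw [h3, pow_add]; ring
        rw [Finset.sum_congr rfl h2, ← Finset.mul_sum]
        simp
      rw [hsum]; push_cast; ring
  intro i
  rw [main i, Complex.ofReal_re]
  have hinner : ∀ k, (∑ t : Fin T, η ^ (2 * (i - k)) * ρ * mu k (Fin.castLE hTN t) ^ 2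
      / (ρ * mu k (Fin.castLE hTN t) + 1)) = η ^ (2 * (i - k)) * s k := by
    intro k
    rw [hs, Finset.mul_sum]
    exact Finset.sum_congr rfl fun t _ => by ring
  simp only [hinner]
  field_simp
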